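/- For all natural numbers n and k ≥ 1, the number of exponent vectors e ∈ ℕ^n with cone-size ∏_{i=1}^{n} (eᵢ + 1) ≤ k is at most k² · ∑_{i=0}^{⌊log₂ k⌋} C(n, i), where C(n,i) is the binomial coefficient and ⌊log₂ k⌋ is the integer base-2 logarithm of k. -/

import Mathlib

-- telescoping sum
lemma CountLowCone.telesum (k : ℕ) (hk : 1 ≤ k) :
    ∑ a ∈ Finset.Ico 1 k, ((1 : ℚ)/a - 1/(a+1)) = 1 - 1/k := by
  induction k with
  | zero => omega
  | succ m ih =>
    rcases Nat.eq_or_lt_of_le hk with h | h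
    · simp [← h]
    · have hm : 1 ≤ m := by omega
      rw [Finset.sum_Ico_succ_top hm, ih hm]
      have : (m : ℚ) ≠ 0 := by positivity
      push_cast
      ring

lemma CountLowCone.sum_div_sq (k : ℕ) : ∑ a ∈ Finset.Ico 1 k, (k/(a+1))^2 ≤ k^2 := by
  rcases Nat.lt_or_ge k 1 with h | h
  · interval_cases k; simp
  have key : ((∑ a ∈ Finset.Ico 1 k, (k/(a+1))^2 : ℕ) : ℚ) ≤ (k:ℚ)^2 * (1 - 1/k) := by
    push_cast
    calc ∑ a ∈ Finset.Ico 1 k, ((k/(a+1) : ℕ) : ℚ)^2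
        ≤ ∑ a ∈ Finset.Ico 1 k, (k:ℚ)^2 * (1/a - 1/(a+1)) := by
          apply Finset.sum_le_sum
          intro a ha
          have ha1 : 1 ≤ a := (Finset.mem_Ico.mp ha).1
          have hap : (0:ℚ) < a := by exact_mod_cast ha1
          have h1 : ((k/(a+1) : ℕ) : ℚ) ≤ (k:ℚ)/(a+1) := by
            exact_mod_cast Nat.cast_div_le
          have h2 : ((k/(a+1) : ℕ) : ℚ)^2 ≤ ((k:ℚ)/(a+1))^2 := by
            have : (0:ℚ) ≤ ((k/(a+1) : ℕ) : ℚ) := by positivity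
            exact pow_le_pow_left₀ this h1 2
          refine h2.trans ?_
          rw [div_pow]
          have heq : (1:ℚ)/a - 1/(a+1) = 1/(a*(a+1)) := by
            field_simp
            ring
          rw [heq, mul_one_div]
          apply div_le_div_of_nonneg_left (by positivity) (by positivity)
          have : (a:ℚ) ≤ a + 1 := by linarith
          calc (a:ℚ)*(a+1) ≤ (a+1)*(a+1) := by nlinarith
            _ = (a+1)^2 := by ring
      _ = (k:ℚ)^2 * (1 - 1/k) := by rw [← Finset.mul_sum, CountLowCone.telesum k h]
  have hk2 : (k:ℚ)^2 * (1 - 1/k) ≤ (k:ℚ)^2 := by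
    have : (0:ℚ) < k := by exact_mod_cast h
    have : (0:ℚ) ≤ 1/k := by positivity
    nlinarith [sq_nonneg (k:ℚ)]
  have := key.trans hk2
  exact_mod_cast this



def CountLowCone.A (s k : ℕ) : Finset (Fin s → ℕ) :=
  (Fintype.piFinset fun _ : Fin s => Finset.range k).filter
    (fun e => (∀ i, 1 ≤ e i) ∧ ∏ i, (e i + 1) ≤ k)

lemma CountLowCone.key (s k : ℕ) : (CountLowCone.A s k).card ≤ k ^ 2 := by
  induction s generalizing k with
  | zero =>
    rcases Nat.eq_zero_or_pos k with rfl | hk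
    · have : CountLowCone.A 0 0 = ∅ := by ext e; simp [CountLowCone.A]
      simp [this]
    · calc (CountLowCone.A 0 k).card ≤ (Fintype.piFinset fun _ : Fin 0 => Finset.range k).card :=
          Finset.card_le_card (Finset.filter_subset _ _)
        _ = 1 := by simp
        _ ≤ k ^ 2 := Nat.one_le_pow _ _ hk
  | succ s ih =>
    have hinj : (CountLowCone.A (s+1) k).card ≤
        ((Finset.Ico 1 k).sigma (fun a => A s (k / (a+1)))).card := by
      apply Finset.card_le_card_of_injOn (fun e => ⟨e 0, Fin.tail e⟩)
      · intro e he
        simp only [Finset.mem_coe, CountLowCone.A, Finset.mem_filter, Fintype.mem_piFinset, Finset.mem_range] at he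
        obtain ⟨hr, h1, hp⟩ := he
        have hprod : e 0 + 1 ≤ k := by
          calc e 0 + 1 ≤ ∏ i, (e i + 1) :=
            Finset.single_le_prod' (fun i _ => Nat.le_add_left 1 (e i)) (Finset.mem_univ 0)
          _ ≤ k := hp
        have hsplit : (e 0 + 1) * ∏ i : Fin s, (Fin.tail e i + 1) = ∏ j, (e j + 1) := by
          rw [Fin.prod_univ_succ (fun j : Fin (s+1) => e j + 1)]; rfl
        refine Finset.mem_sigma.mpr ⟨Finset.mem_Ico.mpr ⟨h1 0, by exact hprod⟩, ?_⟩
        simp only [CountLowCone.A, Finset.mem_filter, Fintype.mem_piFinset, Finset.mem_range]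
        refine ⟨fun i => ?_, fun i => h1 _, ?_⟩
        · have htail : Fin.tail e i + 1 ≤ k / (e 0 + 1) := by
            rw [Nat.le_div_iff_mul_le (by omega)]
            calc (Fin.tail e i + 1) * (e 0 + 1)
                ≤ (∏ j : Fin s, (Fin.tail e j + 1)) * (e 0 + 1) := by
                  apply Nat.mul_le_mul_right
                  exact Finset.single_le_prod'
                    (fun j _ => Nat.le_add_left 1 (Fin.tail e j)) (Finset.mem_univ i)
              _ = ∏ j, (e j + 1) := by rw [mul_comm]; exact hsplit
              _ ≤ k := hp
          omega
        · rw [Nat.le_div_iff_mul_le (by omega), mul_comm]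
          exact hsplit.le.trans hp
      · intro e he e' he' h
        simp only [Sigma.mk.inj_iff] at h
        obtain ⟨h0, ht⟩ := h
        funext i
        refine Fin.cases h0 (fun j => ?_) i
        exact congrFun (eq_of_heq ht) j
    calc (CountLowCone.A (s+1) k).card ≤ _ := hinj
      _ = ∑ a ∈ Finset.Ico 1 k, (CountLowCone.A s (k / (a+1))).card := Finset.card_sigma _ _
      _ ≤ ∑ a ∈ Finset.Ico 1 k, (k / (a+1)) ^ 2 := Finset.sum_le_sum fun a _ => ih _
      _ ≤ k ^ 2 := CountLowCone.sum_div_sq k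




/-- **Counting low-cone monomials.** For `k ≥ 1`, the number of exponent vectors
`e ∈ ℕ^n` with cone-size `∏ (eᵢ + 1) ≤ k` is at most
`k² · ∑_{i=0}^{⌊log₂ k⌋} C(n, i)`. -/
theorem count_low_cone_monomials
    (n k : ℕ) (hk : 1 ≤ k) :
    {e : Fin n → ℕ | ∏ i, (e i + 1) ≤ k}.Finite ∧
    {e : Fin n → ℕ | ∏ i, (e i + 1) ≤ k}.ncard ≤
      k ^ 2 * ∑ i ∈ Finset.range (Nat.log 2 k + 1), n.choose i := by
  set L := Nat.log 2 k with hL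
  set S : Finset (Fin n → ℕ) :=
    (Fintype.piFinset fun _ : Fin n => Finset.range k).filter
      (fun e => ∏ i, (e i + 1) ≤ k) with hS
  have hset : {e : Fin n → ℕ | ∏ i, (e i + 1) ≤ k} = ↑S := by
    ext e
    simp only [Set.mem_setOf_eq, hS, Finset.coe_filter, Fintype.mem_piFinset,
      Finset.mem_range, Set.mem_setOf_eq]
    constructor
    · intro hp
      refine ⟨fun i => ?_, hp⟩
      have : e i + 1 ≤ ∏ j, (e j + 1) :=
        Finset.single_le_prod' (fun j _ => Nat.le_add_left 1 (e j)) (Finset.mem_univ i)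
      omega
    · exact fun h => h.2
  rw [hset]
  refine ⟨S.finite_toSet, ?_⟩
  rw [Set.ncard_coe_finset]
  set supp : (Fin n → ℕ) → Finset (Fin n) :=
    fun e => Finset.univ.filter (fun i => e i ≠ 0) with hsupp
  have hmap : ∀ e ∈ S, supp e ∈ (Finset.univ : Finset (Fin n)).powerset := by
    intro e _; exact Finset.mem_powerset.mpr (Finset.subset_univ _)
  rw [Finset.card_eq_sum_card_fiberwise hmap]
  set f : Finset (Fin n) → ℕ := fun T => (S.filter (fun e => supp e = T)).card with hf
  have himg : ∀ T : Finset (Fin n),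
      Finset.univ.image (T.orderEmbOfFin rfl) = T := by
    intro T
    ext i
    simp only [Finset.mem_image, Finset.mem_univ, true_and]
    constructor
    · rintro ⟨j, rfl⟩; exact T.orderEmbOfFin_mem rfl j
    · intro hi
      have : i ∈ Set.range (T.orderEmbOfFin rfl) := by
        rw [T.range_orderEmbOfFin rfl]; exact hi
      exact this
  have hfiber : ∀ T : Finset (Fin n), f T ≤ k ^ 2 := by
    intro T
    refine le_trans ?_ (CountLowCone.key T.card k)
    apply Finset.card_le_card_of_injOn
      (fun e => fun j : Fin T.card => e (T.orderEmbOfFin rfl j))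
    · intro e he
      simp only [Finset.mem_coe, Finset.mem_filter, hS, Fintype.mem_piFinset, Finset.mem_range] at he
      obtain ⟨⟨hr, hp⟩, hsT⟩ := he
      have hprodT : ∏ j : Fin T.card, (e (T.orderEmbOfFin rfl j) + 1) = ∏ i ∈ T, (e i + 1) := by
        conv_rhs => rw [← himg T]
        rw [Finset.prod_image
          (fun a _ b _ hab => (T.orderEmbOfFin rfl).injective hab)]
      simp only [Finset.mem_coe, CountLowCone.A, Finset.mem_filter, Fintype.mem_piFinset, Finset.mem_range]
      refine ⟨fun j => hr _, fun j => ?_, ?_⟩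
      · have hmem : T.orderEmbOfFin rfl j ∈ supp e := by
          rw [hsT]; exact T.orderEmbOfFin_mem rfl j
        simp only [hsupp, Finset.mem_filter] at hmem
        omega
      · calc ∏ j : Fin T.card, (e (T.orderEmbOfFin rfl j) + 1)
            = ∏ i ∈ T, (e i + 1) := hprodT
          _ ≤ ∏ i, (e i + 1) :=
            Finset.prod_le_prod_of_subset_of_one_le' (Finset.subset_univ T)
              (fun i _ _ => Nat.le_add_left 1 (e i))
          _ ≤ k := hp
    · intro e he e' he' h
      simp only [Finset.mem_coe, Finset.mem_filter] at he he'
      funext i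
      by_cases hi : i ∈ T
      · have : i ∈ Set.range (T.orderEmbOfFin rfl) := by
          rw [T.range_orderEmbOfFin rfl]; exact hi
        obtain ⟨j, rfl⟩ := this
        exact congrFun h j
      · have h1 : e i = 0 := by
          by_contra hne
          refine hi ?_
          rw [← he.2]
          exact Finset.mem_filter.mpr ⟨Finset.mem_univ i, hne⟩
        have h2 : e' i = 0 := by
          by_contra hne
          refine hi ?_
          rw [← he'.2]
          exact Finset.mem_filter.mpr ⟨Finset.mem_univ i, hne⟩
        rw [h1, h2]
  have hempty : ∀ T : Finset (Fin n), L < T.card → f T = 0 := by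
    intro T hT
    rw [hf, Finset.card_eq_zero, Finset.filter_eq_empty_iff]
    rintro e he rfl
    simp only [Finset.mem_filter, hS, Fintype.mem_piFinset, Finset.mem_range] at he
    obtain ⟨hr, hp⟩ := he
    have h2 : 2 ^ (supp e).card ≤ k := by
      calc 2 ^ (supp e).card = ∏ _i ∈ supp e, 2 := by rw [Finset.prod_const]
        _ ≤ ∏ i ∈ supp e, (e i + 1) := by
            apply Finset.prod_le_prod'
            intro i hi
            simp only [hsupp, Finset.mem_filter] at hi
            omega
        _ ≤ ∏ i, (e i + 1) :=
            Finset.prod_le_prod_of_subset_of_one_le' (Finset.subset_univ _)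
              (fun i _ _ => Nat.le_add_left 1 (e i))
        _ ≤ k := hp
    have := Nat.le_log_of_pow_le (by norm_num) h2
    omega
  have hrestrict : ∑ T ∈ (Finset.univ : Finset (Fin n)).powerset, f T
      = ∑ T ∈ (Finset.univ : Finset (Fin n)).powerset.filter (fun T => T.card ≤ L), f T := by
    symm
    apply Finset.sum_filter_of_ne
    intro T _ hne
    by_contra hc
    exact hne (hempty T (by omega))
  rw [hrestrict]
  calc ∑ T ∈ (Finset.univ : Finset (Fin n)).powerset.filter (fun T => T.card ≤ L), f T
      ≤ ∑ _T ∈ (Finset.univ : Finset (Fin n)).powerset.filter (fun T => T.card ≤ L), k ^ 2 :=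
        Finset.sum_le_sum (fun T _ => hfiber T)
    _ = ((Finset.univ : Finset (Fin n)).powerset.filter (fun T => T.card ≤ L)).card * k ^ 2 := by
        rw [Finset.sum_const, smul_eq_mul]
    _ = k ^ 2 * ((Finset.univ : Finset (Fin n)).powerset.filter (fun T => T.card ≤ L)).card := by
        ring
    _ ≤ k ^ 2 * ∑ i ∈ Finset.range (L + 1), n.choose i := by
        apply Nat.mul_le_mul_left
        have heq : (Finset.univ : Finset (Fin n)).powerset.filter (fun T => T.card ≤ L)
            = (Finset.range (L+1)).biUnion (fun i => Finset.powersetCard i Finset.univ) := by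
          ext T
          simp [Finset.mem_powersetCard, Nat.lt_succ_iff, Finset.subset_univ]
        rw [heq]
        calc ((Finset.range (L+1)).biUnion (fun i => Finset.powersetCard i Finset.univ)).card
            ≤ ∑ i ∈ Finset.range (L+1), (Finset.powersetCard i (Finset.univ : Finset (Fin n))).card :=
              Finset.card_biUnion_le
          _ = ∑ i ∈ Finset.range (L+1), n.choose i := by
              apply Finset.sum_congr rfl
              intro i _
              rw [Finset.card_powersetCard, Finset.card_univ, Fintype.card_fin]
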